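/- Let Δ be a simplicial complex on [n] with β_{k-1}(Δ) = 0, and let X be an (n,k)-complex of Δ with full (k-1)-skeleton K^{k-1}_n. Then any two of the following imply the third, and any two are equivalent to X being a k-tree: (1) |X_k| = C(n-1, k); (2) β_k(X) = 0; (3) β_{k-1}(X) = 0. -/

import Mathlib

open Finset

/-- Sign entry of the simplicial boundary matrix between faces `σ ⊆ τ` with `|σ|+1 = |τ|`. -/
def bdE {n : ℕ} (σ τ : Finset (Fin n)) : ℤ :=
  if σ ⊆ τ ∧ σ.card + 1 = τ.card then
    ∑ a ∈ τ \ σ, (-1 : ℤ) ^ (τ.filter (fun b => b < a)).card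
  else 0

/-- Faces of `X` of cardinality `c` (i.e. dimension `c-1`). -/
def cF {n : ℕ} (X : Finset (Finset (Fin n))) (c : ℕ) : Finset (Finset (Fin n)) :=
  X.filter (fun s => s.card = c)

/-- Relative faces of the pair `(X,Y)` of cardinality `c`. -/
def relF {n : ℕ} (X Y : Finset (Finset (Fin n))) (c : ℕ) : Finset (Finset (Fin n)) :=
  (X \ Y).filter (fun s => s.card = c)

/-- Relative boundary matrix from cardinality level `c` to level `c-1`. -/
def dMat {n : ℕ} (X Y : Finset (Finset (Fin n))) (c : ℕ) :
    Matrix ↥(relF X Y (c - 1)) ↥(relF X Y c) ℤ :=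
  Matrix.of fun σ τ => bdE σ.1 τ.1

/-- Relative boundary map (as a linear map on integer chains). -/
noncomputable def dLin {n : ℕ} (X Y : Finset (Finset (Fin n))) (c : ℕ) :
    (↥(relF X Y c) → ℤ) →ₗ[ℤ] (↥(relF X Y (c - 1)) → ℤ) :=
  Matrix.toLin' (dMat X Y c)

/-- Relative simplicial homology of the pair `(X,Y)` at cardinality level `c`
(i.e. the homology group `H_{c-1}(X,Y)`; for `Y = ∅` this is reduced homology `H̃_{c-1}(X)`). -/
abbrev RelH {n : ℕ} (X Y : Finset (Finset (Fin n))) (c : ℕ) :=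
  LinearMap.ker (dLin X Y c) ⧸
    Submodule.comap (LinearMap.ker (dLin X Y c)).subtype (LinearMap.range (dLin X Y (c + 1)))

/-- Relative boundary matrix over `ℚ`. -/
noncomputable def qMat {n : ℕ} (X Y : Finset (Finset (Fin n))) (c : ℕ) :
    Matrix ↥(relF X Y (c - 1)) ↥(relF X Y c) ℚ :=
  (dMat X Y c).map fun z => (z : ℚ)

/-- Relative Betti number at cardinality level `c`, i.e. `β_{c-1}(X,Y)`. -/
noncomputable def bettiL {n : ℕ} (X Y : Finset (Finset (Fin n))) (c : ℕ) : ℕ :=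
  ((relF X Y c).card - (qMat X Y c).rank) - (qMat X Y (c + 1)).rank

/-- An abstract simplicial complex (including the empty face). -/
def IsComplex {n : ℕ} (X : Finset (Finset (Fin n))) : Prop :=
  ∅ ∈ X ∧ ∀ s ∈ X, ∀ t ⊆ s, t ∈ X

/-- `X` is an `(n,k)`-complex of `Δ`: a complex with `K^{k-1} ∩ Δ ⊆ X ⊆ K^k ∩ Δ`. -/
def KCplx {n : ℕ} (Δ : Finset (Finset (Fin n))) (k : ℕ) (X : Finset (Finset (Fin n))) : Prop :=
  IsComplex X ∧ Δ.filter (fun s => s.card ≤ k) ⊆ X ∧ X ⊆ Δ.filter (fun s => s.card ≤ k + 1)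

/-- `X` is a `k`-dimensional spanning tree of `Γ`: an `(n,k)`-complex of `Γ` with
`β_k(X) = 0` and `|X_k| = rank ∂_k^Γ`. -/
def IsTree {n : ℕ} (Γ : Finset (Finset (Fin n))) (k : ℕ) (X : Finset (Finset (Fin n))) : Prop :=
  KCplx Γ k X ∧ bettiL X ∅ (k + 1) = 0 ∧ (cF X (k + 1)).card = (qMat Γ ∅ (k + 1)).rank

lemma bdE_eq_zero {n : ℕ} {σ τ : Finset (Fin n)} (h : ¬(σ ⊆ τ ∧ σ.card + 1 = τ.card)) :
    bdE σ τ = 0 := if_neg h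

lemma bdE_of_sdiff {n : ℕ} {σ τ : Finset (Fin n)} {a : Fin n} (hsub : σ ⊆ τ)
    (hcard : σ.card + 1 = τ.card) (hd : τ \ σ = {a}) :
    bdE σ τ = (-1 : ℤ) ^ (τ.filter (fun b => b < a)).card := by
  rw [bdE, if_pos ⟨hsub, hcard⟩, hd, Finset.sum_singleton]

lemma sdiff_of_card {n : ℕ} {σ τ : Finset (Fin n)} (hsub : σ ⊆ τ)
    (hcard : σ.card + 1 = τ.card) : ∃ a, a ∉ σ ∧ τ = insert a σ ∧ τ \ σ = {a} := by
  have h1 : (τ \ σ).card = 1 := by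
    rw [Finset.card_sdiff_of_subset hsub]; omega
  obtain ⟨a, ha⟩ := Finset.card_eq_one.1 h1
  have haσ : a ∉ σ := by
    have : a ∈ τ \ σ := ha ▸ Finset.mem_singleton_self a
    exact (Finset.mem_sdiff.1 this).2
  refine ⟨a, haσ, ?_, ha⟩
  have hsub2 : insert a σ ⊆ τ := by
    intro x hx
    rcases Finset.mem_insert.1 hx with rfl | hx
    · have : x ∈ τ \ σ := ha ▸ Finset.mem_singleton_self x
      exact (Finset.mem_sdiff.1 this).1
    · exact hsub hx
  exact (Finset.eq_of_subset_of_card_le hsub2 (by rw [Finset.card_insert_of_notMem haσ]; omega)).symm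

lemma bdE_insert {n : ℕ} {σ : Finset (Fin n)} {a : Fin n} (ha : a ∉ σ) :
    bdE σ (insert a σ) = (-1 : ℤ) ^ (σ.filter (fun b => b < a)).card := by
  have hsub : σ ⊆ insert a σ := Finset.subset_insert a σ
  have hcard : σ.card + 1 = (insert a σ).card := (Finset.card_insert_of_notMem ha).symm
  have hd : insert a σ \ σ = {a} := by
    rw [Finset.insert_sdiff_of_notMem _ ha]; simp [ha]
  rw [bdE_of_sdiff hsub hcard hd]
  congr 2
  rw [Finset.filter_insert, if_neg (lt_irrefl a)]

lemma dd_aux {n : ℕ} {σ υ : Finset (Fin n)} {a b : Fin n} (hab : a < b)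
    (ha : a ∉ σ) (hb : b ∉ σ) (hυ : υ = insert a (insert b σ)) :
    bdE σ (insert a σ) * bdE (insert a σ) υ + bdE σ (insert b σ) * bdE (insert b σ) υ = 0 := by
  have hne : a ≠ b := ne_of_lt hab
  have hcard : υ.card = σ.card + 2 := by
    rw [hυ, Finset.card_insert_of_notMem (by simp [ha, hne]),
      Finset.card_insert_of_notMem hb]
  have h1 : bdE σ (insert a σ) = (-1 : ℤ) ^ (σ.filter (fun x => x < a)).card := bdE_insert ha
  have h2 : bdE σ (insert b σ) = (-1 : ℤ) ^ (σ.filter (fun x => x < b)).card := bdE_insert hb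
  -- second factors
  have hsub1 : insert a σ ⊆ υ := by
    rw [hυ]; intro x hx
    rcases Finset.mem_insert.1 hx with rfl | hx
    · exact Finset.mem_insert_self _ _
    · exact Finset.mem_insert_of_mem (Finset.mem_insert_of_mem hx)
  have hsub2 : insert b σ ⊆ υ := by
    rw [hυ]; intro x hx
    rcases Finset.mem_insert.1 hx with rfl | hx
    · exact Finset.mem_insert_of_mem (Finset.mem_insert_self _ _)
    · exact Finset.mem_insert_of_mem (Finset.mem_insert_of_mem hx)
  have hc1 : (insert a σ).card + 1 = υ.card := by
    rw [Finset.card_insert_of_notMem ha, hcard]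
  have hc2 : (insert b σ).card + 1 = υ.card := by
    rw [Finset.card_insert_of_notMem hb, hcard]
  have hd1 : υ \ insert a σ = {b} := by
    rw [hυ]; ext x
    simp only [Finset.mem_sdiff, Finset.mem_insert, Finset.mem_singleton]
    constructor
    · rintro ⟨h1 | h1 | h1, h2⟩
      · exact absurd (Or.inl h1) h2
      · exact h1
      · exact absurd (Or.inr h1) h2
    · rintro rfl
      exact ⟨Or.inr (Or.inl rfl), by push_neg; exact ⟨hne.symm, hb⟩⟩
  have hd2 : υ \ insert b σ = {a} := by
    rw [hυ]; ext x
    simp only [Finset.mem_sdiff, Finset.mem_insert, Finset.mem_singleton]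
    constructor
    · rintro ⟨h1 | h1 | h1, h2⟩
      · exact h1
      · exact absurd (Or.inl h1) h2
      · exact absurd (Or.inr h1) h2
    · rintro rfl
      exact ⟨Or.inl rfl, by push_neg; exact ⟨hne, ha⟩⟩
  have h3 : bdE (insert a σ) υ = (-1 : ℤ) ^ ((σ.filter (fun x => x < b)).card + 1) := by
    rw [bdE_of_sdiff hsub1 hc1 hd1]
    congr 1
    rw [hυ, Finset.filter_insert, if_pos hab, Finset.filter_insert, if_neg (lt_irrefl b),
      Finset.card_insert_of_notMem (by simp [ha])]
  have h4 : bdE (insert b σ) υ = (-1 : ℤ) ^ (σ.filter (fun x => x < a)).card := by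
    rw [bdE_of_sdiff hsub2 hc2 hd2]
    congr 1
    rw [hυ, Finset.filter_insert, if_neg (lt_irrefl a), Finset.filter_insert,
      if_neg (not_lt.2 hab.le)]
  rw [h1, h2, h3, h4, pow_succ]
  ring

lemma dd {n : ℕ} (σ υ : Finset (Fin n)) (hc : σ.card + 2 = υ.card)
    (S : Finset (Finset (Fin n)))
    (hS : ∀ τ, σ ⊆ τ → τ ⊆ υ → τ.card = σ.card + 1 → τ ∈ S) :
    ∑ τ ∈ S, bdE σ τ * bdE τ υ = 0 := by
  classical
  set T : Finset (Finset (Fin n)) :=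
    υ.powerset.filter (fun τ => σ ⊆ τ ∧ τ.card = σ.card + 1) with hT
  have hmemT : ∀ τ, τ ∈ T ↔ (τ ⊆ υ ∧ σ ⊆ τ ∧ τ.card = σ.card + 1) := by
    intro τ; simp [hT, Finset.mem_filter, Finset.mem_powerset, and_assoc]
  have hTS : T ⊆ S := by
    intro τ hτ
    obtain ⟨h1, h2, h3⟩ := (hmemT τ).1 hτ
    exact hS τ h2 h1 h3
  have hsum : ∑ τ ∈ S, bdE σ τ * bdE τ υ = ∑ τ ∈ T, bdE σ τ * bdE τ υ := by
    refine (Finset.sum_subset hTS ?_).symm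
    intro τ hτS hτT
    by_cases h1 : σ ⊆ τ ∧ σ.card + 1 = τ.card
    · by_cases h2 : τ ⊆ υ
      · exact absurd ((hmemT τ).2 ⟨h2, h1.1, h1.2.symm⟩) hτT
      · have : bdE τ υ = 0 := bdE_eq_zero (fun h => h2 h.1)
        rw [this, mul_zero]
    · rw [bdE_eq_zero h1, zero_mul]
  rw [hsum]
  by_cases hσυ : σ ⊆ υ
  · have hcard2 : (υ \ σ).card = 2 := by rw [Finset.card_sdiff_of_subset hσυ]; omega
    obtain ⟨a, b, hab, hd⟩ := Finset.card_eq_two.1 hcard2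
    have haυ : a ∈ υ ∧ a ∉ σ := by
      have : a ∈ υ \ σ := by rw [hd]; simp
      exact Finset.mem_sdiff.1 this
    have hbυ : b ∈ υ ∧ b ∉ σ := by
      have : b ∈ υ \ σ := by rw [hd]; simp
      exact Finset.mem_sdiff.1 this
    have hυeq : υ = insert a (insert b σ) := by
      ext x
      simp only [Finset.mem_insert]
      constructor
      · intro hx
        by_cases hxσ : x ∈ σ
        · exact Or.inr (Or.inr hxσ)
        · have : x ∈ υ \ σ := Finset.mem_sdiff.2 ⟨hx, hxσ⟩
          rw [hd] at this
          rcases Finset.mem_insert.1 this with h | h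
          · exact Or.inl h
          · exact Or.inr (Or.inl (Finset.mem_singleton.1 h))
      · rintro (rfl | rfl | hx)
        · exact haυ.1
        · exact hbυ.1
        · exact hσυ hx
    have hTeq : T = {insert a σ, insert b σ} := by
      ext τ
      rw [hmemT τ]
      simp only [Finset.mem_insert, Finset.mem_singleton]
      constructor
      · rintro ⟨h1, h2, h3⟩
        obtain ⟨x, hxσ, hτx, hdx⟩ := sdiff_of_card h2 h3.symm
        have hxυσ : x ∈ υ \ σ := by
          refine Finset.mem_sdiff.2 ⟨h1 ?_, hxσ⟩
          rw [hτx]; exact Finset.mem_insert_self _ _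
        rw [hd] at hxυσ
        rcases Finset.mem_insert.1 hxυσ with h | h
        · exact Or.inl (h ▸ hτx)
        · exact Or.inr ((Finset.mem_singleton.1 h) ▸ hτx)
      · rintro (rfl | rfl)
        · refine ⟨?_, Finset.subset_insert _ _, Finset.card_insert_of_notMem haυ.2⟩
          rw [hυeq]
          intro x hx
          rcases Finset.mem_insert.1 hx with rfl | hx
          · exact Finset.mem_insert_self _ _
          · exact Finset.mem_insert_of_mem (Finset.mem_insert_of_mem hx)
        · refine ⟨?_, Finset.subset_insert _ _, Finset.card_insert_of_notMem hbυ.2⟩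
          rw [hυeq]
          intro x hx
          rcases Finset.mem_insert.1 hx with rfl | hx
          · exact Finset.mem_insert_of_mem (Finset.mem_insert_self _ _)
          · exact Finset.mem_insert_of_mem (Finset.mem_insert_of_mem hx)
    have hne2 : insert a σ ≠ insert b σ := by
      intro h
      have : a ∈ insert b σ := h ▸ Finset.mem_insert_self a σ
      rcases Finset.mem_insert.1 this with h' | h'
      · exact hab h'
      · exact haυ.2 h'
    rw [hTeq, Finset.sum_pair hne2]
    rcases lt_or_gt_of_ne hab with h | h
    · exact dd_aux h haυ.2 hbυ.2 hυeq
    · have hswap : υ = insert b (insert a σ) := by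
        rw [hυeq]; exact Finset.insert_comm a b σ
      have := dd_aux h hbυ.2 haυ.2 hswap
      linarith [this]
  · have hTe : T = ∅ := by
      rw [Finset.eq_empty_iff_forall_notMem]
      intro τ hτ
      obtain ⟨h1, h2, _⟩ := (hmemT τ).1 hτ
      exact hσυ (h2.trans h1)
    rw [hTe, Finset.sum_empty]

section LinAlg

variable {m m' α α' ι : Type*} [Fintype m] [Fintype m'] [Fintype α] [Fintype α'] [Fintype ι]

lemma rank_sub_le [DecidableEq m] [DecidableEq α] (A : Matrix m α ℚ) (e : m' → m) (g : α' → α) :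
    (A.submatrix e g).rank ≤ A.rank := by
  classical
  set P : Matrix α α' ℚ := Matrix.of fun x j => if x = g j then 1 else 0 with hP
  set Q : Matrix m' m ℚ := Matrix.of fun i x => if x = e i then 1 else 0 with hQ
  have hEq : A.submatrix e g = Q * A * P := by
    ext i j
    simp only [Matrix.submatrix_apply, Matrix.mul_apply, hP, hQ, Matrix.of_apply,
      ite_mul, mul_ite, one_mul, mul_one, zero_mul, mul_zero]
    rw [Finset.sum_ite_eq' Finset.univ (g j)]
    simp [Finset.sum_ite_eq' Finset.univ (e i)]
  rw [hEq]
  exact le_trans (Matrix.rank_mul_le_left (Q * A) P)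
    (Matrix.rank_mul_le_right Q A)

lemma rank_sub_eq [DecidableEq m] [DecidableEq α] [DecidableEq m'] [DecidableEq α']
    (A : Matrix m α ℚ) (e : m' ≃ m) (g : α' ≃ α) :
    (A.submatrix e g).rank = A.rank := by
  refine le_antisymm (rank_sub_le A e g) ?_
  have : A = (A.submatrix e g).submatrix e.symm g.symm := by
    ext i j; simp
  calc A.rank = ((A.submatrix e g).submatrix e.symm g.symm).rank := by rw [← this]
    _ ≤ (A.submatrix e g).rank := rank_sub_le _ _ _

lemma card_le_finrank_of_pivot [DecidableEq ι] (W : Submodule ℚ (m → ℚ)) (v : ι → m → ℚ)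
    (hv : ∀ i, v i ∈ W) (r : ι → m) (hdiag : ∀ i, v i (r i) ≠ 0)
    (hoff : ∀ i j, i ≠ j → v j (r i) = 0) :
    Fintype.card ι ≤ Module.finrank ℚ W := by
  have hind : LinearIndependent ℚ v := by
    rw [Fintype.linearIndependent_iff]
    intro g hg i
    have h0 := congrFun hg (r i)
    simp only [Finset.sum_apply, Pi.smul_apply, smul_eq_mul, Pi.zero_apply] at h0
    rw [Finset.sum_eq_single i (fun b _ hb => by rw [hoff i b (Ne.symm hb), mul_zero])
      (fun h => absurd (Finset.mem_univ i) h)] at h0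
    exact (mul_eq_zero.1 h0).resolve_right (hdiag i)
  have hind' : LinearIndependent ℚ (fun i => (⟨v i, hv i⟩ : W)) := by
    apply LinearIndependent.of_comp W.subtype
    exact hind
  exact hind'.fintype_card_le_finrank

lemma pivot_le_rank [DecidableEq ι] [DecidableEq α] (A : Matrix m α ℚ) (c : ι → α) (r : ι → m)
    (hdiag : ∀ i, A (r i) (c i) ≠ 0) (hoff : ∀ i j, i ≠ j → A (r i) (c j) = 0) :
    Fintype.card ι ≤ A.rank := by
  refine card_le_finrank_of_pivot (LinearMap.range A.mulVecLin)
    (fun i => fun x => A x (c i)) (fun i => ⟨Pi.single (c i) 1, ?_⟩) r hdiag hoff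
  rw [Matrix.mulVecLin_apply, Matrix.mulVec_single]
  ext x; simp

lemma pivot_le_nullity [DecidableEq ι] (A : Matrix m α ℚ) (v : ι → α → ℚ)
    (hv : ∀ i, A.mulVec (v i) = 0) (r : ι → α) (hdiag : ∀ i, v i (r i) ≠ 0)
    (hoff : ∀ i j, i ≠ j → v j (r i) = 0) :
    Fintype.card ι ≤ Module.finrank ℚ (LinearMap.ker A.mulVecLin) :=
  card_le_finrank_of_pivot _ v (fun i => by rw [LinearMap.mem_ker, Matrix.mulVecLin_apply, hv i])
    r hdiag hoff

lemma rank_nullity (A : Matrix m α ℚ) :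
    A.rank + Module.finrank ℚ (LinearMap.ker A.mulVecLin) = Fintype.card α := by
  have h := LinearMap.finrank_range_add_finrank_ker A.mulVecLin
  rw [Module.finrank_fintype_fun_eq_card] at h
  exact h

lemma rank_eq_zero_of_isEmpty [IsEmpty α] (A : Matrix m α ℚ) : A.rank = 0 :=
  le_antisymm (le_trans (Matrix.rank_le_card_width A) (by simp)) (Nat.zero_le _)

end LinAlg

section UMatSec

def lvl (n c : ℕ) : Finset (Finset (Fin n)) := Finset.powersetCard c Finset.univ

lemma mem_lvl {n c : ℕ} {s : Finset (Fin n)} : s ∈ lvl n c ↔ s.card = c := by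
  simp [lvl, Finset.mem_powersetCard_univ]

lemma card_lvl (n c : ℕ) : (lvl n c).card = n.choose c := by
  simp [lvl, Finset.card_powersetCard]

noncomputable def UMat (n c : ℕ) : Matrix ↥(lvl n (c-1)) ↥(lvl n c) ℚ :=
  Matrix.of fun σ τ => ((bdE σ.1 τ.1 : ℤ) : ℚ)

variable {n : ℕ} [NeZero n]

lemma card_offset (c : ℕ) :
    (Finset.powersetCard c ((Finset.univ : Finset (Fin n)) \ {0})).card = (n-1).choose c := by
  rw [Finset.card_powersetCard, Finset.card_sdiff_of_subset (Finset.subset_univ _)]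
  simp

lemma not_mem_zero_of_offset {c : ℕ} {σ : Finset (Fin n)}
    (h : σ ∈ Finset.powersetCard c ((Finset.univ : Finset (Fin n)) \ {0})) :
    (0 : Fin n) ∉ σ ∧ σ.card = c := by
  rw [Finset.mem_powersetCard] at h
  refine ⟨fun h0 => ?_, h.2⟩
  have := h.1 h0
  simp at this

lemma bdE_pivot_ne {σ : Finset (Fin n)} (h0 : (0:Fin n) ∉ σ) :
    ((bdE σ (insert 0 σ) : ℤ) : ℚ) ≠ 0 := by
  rw [bdE_insert h0]
  simp

lemma bdE_pivot_off {σ ρ : Finset (Fin n)} (h0 : (0:Fin n) ∉ σ)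
    (hcard : σ.card = ρ.card) (hne : σ ≠ ρ) : bdE σ (insert 0 ρ) = 0 := by
  apply bdE_eq_zero
  rintro ⟨hsub, _⟩
  have hsub' : σ ⊆ ρ := (Finset.subset_insert_iff_of_notMem h0).1 hsub
  exact hne (Finset.eq_of_subset_of_card_le hsub' (le_of_eq hcard.symm))

lemma U_lower {c : ℕ} (hc : 1 ≤ c) : (n-1).choose (c-1) ≤ (UMat n c).rank := by
  classical
  rw [← card_offset (n := n) (c-1), ← Fintype.card_coe]
  refine pivot_le_rank (UMat n c)
    (fun σ => ⟨insert 0 σ.1, mem_lvl.2 ?_⟩) (fun σ => ⟨σ.1, mem_lvl.2 (not_mem_zero_of_offset σ.2).2⟩)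
    ?_ ?_
  · obtain ⟨h0, hcard⟩ := not_mem_zero_of_offset σ.2
    rw [Finset.card_insert_of_notMem h0, hcard]
    omega
  · intro i
    exact bdE_pivot_ne (not_mem_zero_of_offset i.2).1
  · intro i j hij
    have hi := not_mem_zero_of_offset i.2
    have hj := not_mem_zero_of_offset j.2
    have : bdE i.1 (insert 0 j.1) = 0 := by
      refine bdE_pivot_off hi.1 (by rw [hi.2, hj.2]) ?_
      exact fun h => hij (Subtype.ext h)
    show ((bdE _ _ : ℤ) : ℚ) = 0
    rw [this]; simp

lemma U_upper {c : ℕ} (hc : 1 ≤ c) : (UMat n c).rank ≤ (n-1).choose (c-1) := by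
  classical
  have hker : (n-1).choose c ≤ Module.finrank ℚ (LinearMap.ker (UMat n c).mulVecLin) := by
    rw [← card_offset (n := n) c, ← Fintype.card_coe]
    refine pivot_le_nullity (UMat n c)
      (fun ρ => fun τ => ((bdE τ.1 (insert 0 ρ.1) : ℤ) : ℚ))
      ?_ (fun ρ => ⟨ρ.1, mem_lvl.2 (not_mem_zero_of_offset ρ.2).2⟩) ?_ ?_
    · intro ρ
      obtain ⟨h0, hcard⟩ := not_mem_zero_of_offset ρ.2
      ext σ
      have hσ : σ.1.card = c - 1 := mem_lvl.1 σ.2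
      show (∑ τ : ↥(lvl n c), UMat n c σ τ * ((bdE τ.1 (insert 0 ρ.1) : ℤ) : ℚ)) = 0
      have : (∑ τ : ↥(lvl n c), UMat n c σ τ * ((bdE τ.1 (insert 0 ρ.1) : ℤ) : ℚ))
          = ((∑ τ ∈ lvl n c, bdE σ.1 τ * bdE τ (insert 0 ρ.1) : ℤ) : ℚ) := by
        push_cast
        exact Finset.sum_coe_sort (lvl n c) (fun τ => ((bdE σ.1 τ : ℤ):ℚ) * ((bdE τ (insert 0 ρ.1) : ℤ):ℚ))
      rw [this]
      rw [dd σ.1 (insert 0 ρ.1) ?_ (lvl n c) ?_]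
      · simp
      · rw [Finset.card_insert_of_notMem h0, hσ, hcard]; omega
      · intro τ _ _ hτc
        rw [mem_lvl, hτc, hσ]; omega
    · intro ρ
      exact bdE_pivot_ne (not_mem_zero_of_offset ρ.2).1
    · intro i j hij
      have hi := not_mem_zero_of_offset i.2
      have hj := not_mem_zero_of_offset j.2
      have : bdE i.1 (insert 0 j.1) = 0 := by
        refine bdE_pivot_off hi.1 (by rw [hi.2, hj.2]) (fun h => hij (Subtype.ext h))
      show ((bdE i.1 (insert 0 j.1) : ℤ) : ℚ) = 0
      rw [this]; simp
  have hrn := rank_nullity (UMat n c)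
  rw [Fintype.card_coe, card_lvl] at hrn
  have hpascal : n.choose c = (n-1).choose (c-1) + (n-1).choose c := by
    obtain ⟨m, rfl⟩ : ∃ m, n = m + 1 := ⟨n - 1, (Nat.succ_pred_eq_of_pos (NeZero.pos n)).symm⟩
    obtain ⟨d, rfl⟩ : ∃ d, c = d + 1 := ⟨c - 1, (Nat.succ_pred_eq_of_pos hc).symm⟩
    simp [Nat.choose_succ_succ]
  omega

end UMatSec

section Glue

variable {n : ℕ}

lemma relF_empty (X : Finset (Finset (Fin n))) (c : ℕ) : relF X ∅ c = cF X c := by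
  simp [relF, cF]

lemma relF_card {X Y : Finset (Finset (Fin n))} {c : ℕ} {s : Finset (Fin n)}
    (h : s ∈ relF X Y c) : s.card = c := (Finset.mem_filter.1 h).2

lemma qMat_entry (X Y : Finset (Finset (Fin n))) (c : ℕ) (σ τ) :
    qMat X Y c σ τ = ((bdE σ.1 τ.1 : ℤ) : ℚ) := rfl

lemma rank_qMat_le_U (X : Finset (Finset (Fin n))) (c : ℕ) :
    (qMat X ∅ c).rank ≤ (UMat n c).rank := by
  classical
  have hEq : qMat X ∅ c = (UMat n c).submatrix
      (fun σ => (⟨σ.1, mem_lvl.2 (relF_card σ.2)⟩ : ↥(lvl n (c-1))))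
      (fun τ => (⟨τ.1, mem_lvl.2 (relF_card τ.2)⟩ : ↥(lvl n c))) := by
    ext σ τ; rfl
  rw [hEq]
  exact rank_sub_le _ _ _

lemma rank_qMat_eq_U (X : Finset (Finset (Fin n))) (c : ℕ)
    (h1 : relF X ∅ (c-1) = lvl n (c-1)) (h2 : relF X ∅ c = lvl n c) :
    (qMat X ∅ c).rank = (UMat n c).rank := by
  classical
  have hEq : qMat X ∅ c = (UMat n c).submatrix
      (Equiv.subtypeEquivRight (fun x => by rw [h1]))
      (Equiv.subtypeEquivRight (fun x => by rw [h2])) := by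
    ext σ τ
    simp only [Matrix.submatrix_apply, Equiv.subtypeEquivRight_apply]
    rfl
  rw [hEq]
  exact rank_sub_eq _ _ _

lemma rank_qMat_zero (X Y : Finset (Finset (Fin n))) : (qMat X Y 0).rank = 0 := by
  have : qMat X Y 0 = 0 := by
    ext σ τ
    rw [qMat_entry]
    have h1 : σ.1.card = 0 := relF_card σ.2
    have h2 : τ.1.card = 0 := relF_card τ.2
    rw [bdE_eq_zero (by omega)]
    simp
  rw [this, Matrix.rank_zero]

lemma rank_qMat_of_empty {X Y : Finset (Finset (Fin n))} {c : ℕ} (h : relF X Y c = ∅) :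
    (qMat X Y c).rank = 0 := by
  haveI : IsEmpty ↥(relF X Y c) := Finset.isEmpty_coe_sort.2 h
  exact rank_eq_zero_of_isEmpty _

lemma relF_full {W : Finset (Finset (Fin n))} {k c : ℕ}
    (hW : ∀ s : Finset (Fin n), s.card ≤ k → s ∈ W) (hc : c ≤ k) :
    relF W ∅ c = lvl n c := by
  ext s
  simp only [relF, Finset.sdiff_empty, Finset.mem_filter, mem_lvl]
  exact ⟨fun h => h.2, fun h => ⟨hW s (by omega), h⟩⟩

lemma betti_eq [NeZero n] (k : ℕ) (W : Finset (Finset (Fin n)))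
    (hW : ∀ s : Finset (Fin n), s.card ≤ k → s ∈ W) :
    bettiL W ∅ k = (n-1).choose k - (qMat W ∅ (k+1)).rank ∧
      (qMat W ∅ (k+1)).rank ≤ (n-1).choose k := by
  have hle : (qMat W ∅ (k+1)).rank ≤ (n-1).choose k := by
    have := (rank_qMat_le_U W (k+1)).trans (U_upper (n := n) (c := k+1) (by omega))
    simpa using this
  refine ⟨?_, hle⟩
  unfold bettiL
  rcases Nat.eq_zero_or_pos k with rfl | hk
  · have h0 : relF W ∅ 0 = {∅} := by
      ext s
      simp only [relF, Finset.sdiff_empty, Finset.mem_filter, Finset.mem_singleton,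
        Finset.card_eq_zero]
      exact ⟨fun h => h.2, fun h => ⟨h ▸ hW ∅ (by simp), h⟩⟩
    have hc1 : (relF W ∅ 0).card = 1 := by rw [h0]; rfl
    rw [rank_qMat_zero, hc1]
    simp
  · have h1 : relF W ∅ (k-1) = lvl n (k-1) := relF_full hW (by omega)
    have h2 : relF W ∅ k = lvl n k := relF_full hW le_rfl
    have hrk : (qMat W ∅ k).rank = (UMat n k).rank := rank_qMat_eq_U W k h1 h2
    have hUk : (UMat n k).rank = (n-1).choose (k-1) :=
      le_antisymm (U_upper hk) (U_lower hk)
    have hcard : (relF W ∅ k).card = n.choose k := by rw [h2, card_lvl]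
    have hpascal : n.choose k = (n-1).choose (k-1) + (n-1).choose k := by
      obtain ⟨m, rfl⟩ : ∃ m, n = m + 1 := ⟨n - 1, (Nat.succ_pred_eq_of_pos (NeZero.pos n)).symm⟩
      obtain ⟨d, rfl⟩ : ∃ d, k = d + 1 := ⟨k - 1, (Nat.succ_pred_eq_of_pos hk).symm⟩
      simp [Nat.choose_succ_succ]
    rw [hcard, hrk, hUk]
    omega

lemma betti_top {X : Finset (Finset (Fin n))} {k : ℕ} (hX2 : ∀ s ∈ X, s.card ≤ k + 1) :
    bettiL X ∅ (k+1) = (cF X (k+1)).card - (qMat X ∅ (k+1)).rank ∧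
      (qMat X ∅ (k+1)).rank ≤ (cF X (k+1)).card := by
  have hE : relF X ∅ (k+2) = ∅ := by
    rw [Finset.eq_empty_iff_forall_notMem]
    intro s hs
    have h1 : s.card = k + 2 := relF_card hs
    have h2 : s ∈ X := by
      simpa [relF] using (Finset.mem_filter.1 hs).1
    have := hX2 s h2
    omega
  have hr0 : (qMat X ∅ (k+2)).rank = 0 := rank_qMat_of_empty hE
  have hcf : relF X ∅ (k+1) = cF X (k+1) := relF_empty X (k+1)
  have hcc : (relF X ∅ (k+1)).card = (cF X (k+1)).card := by rw [hcf]
  have hle : (qMat X ∅ (k+1)).rank ≤ (cF X (k+1)).card := by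
    have := Matrix.rank_le_card_width (qMat X ∅ (k+1))
    rwa [Fintype.card_coe, hcc] at this
  constructor
  · show ((relF X ∅ (k+1)).card - (qMat X ∅ (k+1)).rank) - (qMat X ∅ (k+1+1)).rank = _
    rw [hcc]
    have h21 : (k+1+1) = k+2 := rfl
    rw [h21, hr0]
    omega
  · exact hle

end Glue


/-- Kalai's two-out-of-three criterion: let `Δ` be a complex on `[n]` with
`β_{k-1}(Δ) = 0` and `X` an `(n,k)`-complex of `Δ` with full `(k-1)`-skeleton.  Then any
two of (1) `|X_k| = C(n-1,k)`, (2) `β_k(X) = 0`, (3) `β_{k-1}(X) = 0` imply the third, and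
any two of them are equivalent to `X` being a `k`-tree of `Δ`. -/
theorem stmt10 (n k : ℕ) (Δ X : Finset (Finset (Fin n)))
    (hΔ : IsComplex Δ) (hβΔ : bettiL Δ ∅ k = 0) (hX : KCplx Δ k X)
    (hfull : ∀ s : Finset (Fin n), s.card ≤ k → s ∈ X) :
    (((cF X (k + 1)).card = (n - 1).choose k ∧ bettiL X ∅ (k + 1) = 0) →
        bettiL X ∅ k = 0) ∧
    (((cF X (k + 1)).card = (n - 1).choose k ∧ bettiL X ∅ k = 0) →
        bettiL X ∅ (k + 1) = 0) ∧
    ((bettiL X ∅ (k + 1) = 0 ∧ bettiL X ∅ k = 0) →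
        (cF X (k + 1)).card = (n - 1).choose k) ∧
    (((cF X (k + 1)).card = (n - 1).choose k ∧ bettiL X ∅ (k + 1) = 0) ↔ IsTree Δ k X) ∧
    (((cF X (k + 1)).card = (n - 1).choose k ∧ bettiL X ∅ k = 0) ↔ IsTree Δ k X) ∧
    ((bettiL X ∅ (k + 1) = 0 ∧ bettiL X ∅ k = 0) ↔ IsTree Δ k X) := by
  rcases Nat.eq_zero_or_pos n with rfl | hn
  · -- n = 0
    have hemp : ∀ (W : Finset (Finset (Fin 0))) (c : ℕ), 1 ≤ c → relF W ∅ c = ∅ := by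
      intro W c hc
      rw [Finset.eq_empty_iff_forall_notMem]
      intro s hs
      have h1 : s.card = c := relF_card hs
      have h2 : s.card ≤ 0 := by
        have := Finset.card_le_univ s
        simpa using this
      omega
    rcases Nat.eq_zero_or_pos k with rfl | hk
    · exfalso
      have h0 : relF Δ ∅ 0 = {∅} := by
        ext s
        simp only [relF, Finset.sdiff_empty, Finset.mem_filter, Finset.mem_singleton,
          Finset.card_eq_zero]
        exact ⟨fun h => h.2, fun h => ⟨h ▸ hΔ.1, h⟩⟩
      have hc1 : (relF Δ ∅ 0).card = 1 := by rw [h0]; rfl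
      have hr0 : (qMat Δ ∅ 0).rank = 0 := rank_qMat_zero Δ ∅
      have hr1 : (qMat Δ ∅ 1).rank = 0 := rank_qMat_of_empty (hemp Δ 1 le_rfl)
      unfold bettiL at hβΔ
      rw [hc1, hr0, hr1] at hβΔ
      omega
    · -- n = 0, k ≥ 1 : everything degenerate
      have e1 : cF X (k+1) = ∅ := by rw [← relF_empty]; exact hemp X (k+1) (by omega)
      have e1c : (cF X (k+1)).card = 0 := by rw [e1]; rfl
      have b2 : bettiL X ∅ (k+1) = 0 := by
        have hc0 : (relF X ∅ (k+1)).card = 0 := by rw [hemp X (k+1) (by omega)]; rfl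
        unfold bettiL
        omega
      have b1 : bettiL X ∅ k = 0 := by
        have hc0 : (relF X ∅ k).card = 0 := by rw [hemp X k hk]; rfl
        unfold bettiL
        omega
      have c1 : (cF X (k+1)).card = (0 - 1).choose k := by
        rw [e1c, Nat.zero_sub, Nat.choose_eq_zero_of_lt hk]
      have htree : IsTree Δ k X := by
        refine ⟨hX, b2, ?_⟩
        rw [e1c, rank_qMat_of_empty (hemp Δ (k+1) (by omega))]
      exact ⟨fun _ => b1, fun _ => b2, fun _ => c1,
        ⟨fun _ => htree, fun _ => ⟨c1, b2⟩⟩,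
        ⟨fun _ => htree, fun _ => ⟨c1, b1⟩⟩,
        ⟨fun _ => htree, fun _ => ⟨b2, b1⟩⟩⟩
  · haveI : NeZero n := ⟨hn.ne'⟩
    have hWΔ : ∀ s : Finset (Fin n), s.card ≤ k → s ∈ Δ := by
      intro s hs
      exact (Finset.mem_filter.1 (hX.2.2 (hfull s hs))).1
    have hX2 : ∀ s ∈ X, s.card ≤ k + 1 := fun s hs => (Finset.mem_filter.1 (hX.2.2 hs)).2
    obtain ⟨BX0, hrN⟩ := betti_eq k X hfull
    obtain ⟨BΔ0, hΔN⟩ := betti_eq k Δ hWΔ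
    obtain ⟨BX1, hrm⟩ := betti_top hX2
    have hΔrank : (qMat Δ ∅ (k+1)).rank = (n-1).choose k := by
      rw [BΔ0] at hβΔ; omega
    have hIsTree : IsTree Δ k X ↔
        ((cF X (k+1)).card = (n-1).choose k ∧
          (cF X (k+1)).card - (qMat X ∅ (k+1)).rank = 0) := by
      unfold IsTree
      rw [hΔrank, BX1]
      constructor
      · rintro ⟨_, h2, h3⟩; exact ⟨h3, h2⟩
      · rintro ⟨h1, h2⟩; exact ⟨hX, h2, h1⟩
    rw [hIsTree, BX0, BX1]
    omega
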